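/- Let G be a finite commutative group, let p be a prime dividing the cardinality of G, and let B be a natural number with B ≤ p. Then p · |{g ∈ G : orderOf(g) < B}| ≤ |G|. In particular, a uniformly random element g of G satisfies orderOf(g) ≥ B with probability at least 1 − 1/p. -/
import Mathlib


/-- In a finite commutative group `G`, if `p` is a prime dividing `|G|` and `B ≤ p`,
then `p · |{g : orderOf g < B}| ≤ |G|`; equivalently, a uniformly random element has
order at least `B` with probability at least `1 − 1/p`. -/
theorem low_order_elements_sparse {G : Type*} [CommGroup G] [Finite G]
    (p : ℕ) (hp : p.Prime) (hdvd : p ∣ Nat.card G) (B : ℕ) (hB : B ≤ p) :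
    p * Nat.card {g : G // orderOf g < B} ≤ Nat.card G ∧
      (1 - 1 / (p : ℝ)) ≤ (Nat.card {g : G // B ≤ orderOf g} : ℝ) / Nat.card G := by
  have := Fintype.ofFinite G
  have : Fact p.Prime := ⟨hp⟩
  rw [Nat.card_eq_fintype_card] at hdvd
  obtain ⟨x, hx⟩ := exists_prime_orderOf_dvd_card p hdvd
  rw [← Nat.card_eq_fintype_card] at hdvd
  -- p does not divide the order of any element of order < B
  have hnd : ∀ g : G, orderOf g < B → ¬ p ∣ orderOf g := by
    intro g hg hdvd'
    have h1 : 0 < orderOf g := orderOf_pos g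
    have := Nat.le_of_dvd h1 hdvd'
    omega
  have hple : NeZero p := ⟨hp.ne_zero⟩
  -- injective map
  have hinj : Function.Injective
      (fun z : {g : G // orderOf g < B} × ZMod p => (z.1 : G) * x ^ (z.2.val)) := by
    rintro ⟨⟨g, hg⟩, i⟩ ⟨⟨g', hg'⟩, j⟩ heq
    simp only at heq
    have hpow : g'⁻¹ * g = x ^ ((j.val : ℤ) - (i.val : ℤ)) := by
      have hg2 : g = g' * x ^ (j.val) * (x ^ (i.val))⁻¹ := by rw [← heq]; group
      rw [hg2, zpow_sub, zpow_natCast, zpow_natCast]; group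
    have hxp : x ^ (p : ℤ) = 1 := by rw [zpow_natCast, ← hx, pow_orderOf_eq_one]
    have hh1 : (g'⁻¹ * g) ^ p = 1 := by
      rw [hpow, ← zpow_natCast _ p, ← zpow_mul,
        mul_comm ((j.val : ℤ) - (i.val : ℤ)), zpow_mul, hxp, one_zpow]
    have hdp : orderOf (g'⁻¹ * g) ∣ p := orderOf_dvd_of_pow_eq_one hh1
    have hdl : orderOf (g'⁻¹ * g) ∣ Nat.lcm (orderOf g'⁻¹) (orderOf g) :=
      (Commute.all _ _).orderOf_mul_dvd_lcm
    rw [orderOf_inv] at hdl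
    have hnp : ¬ p ∣ Nat.lcm (orderOf g') (orderOf g) := by
      intro h
      rcases (Nat.Prime.dvd_mul hp).mp (h.trans (Nat.lcm_dvd_mul _ _)) with h' | h'
      · exact hnd g' hg' h'
      · exact hnd g hg h'
    have hord1 : orderOf (g'⁻¹ * g) = 1 := by
      rcases (Nat.dvd_prime hp).mp hdp with h | h
      · exact h
      · exact absurd (h ▸ hdl) hnp
    have hgg : g' = g := inv_mul_eq_one.mp (orderOf_eq_one_iff.mp hord1)
    subst hgg
    rename_i hg'
    have hxij : x ^ i.val = x ^ j.val := by
      exact mul_left_cancel heq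
    have hmod := pow_eq_pow_iff_modEq.mp hxij
    rw [hx] at hmod
    have hij : i.val = j.val := hmod.eq_of_lt_of_lt (ZMod.val_lt i) (ZMod.val_lt j)
    simp [Prod.ext_iff, Subtype.ext_iff, ZMod.val_injective _ hij]
  have hcard : Nat.card ({g : G // orderOf g < B} × ZMod p) ≤ Nat.card G :=
    Nat.card_le_card_of_injective _ hinj
  rw [Nat.card_prod, Nat.card_zmod, mul_comm] at hcard
  refine ⟨hcard, ?_⟩
  have hcompl : Nat.card {g : G // B ≤ orderOf g}
      = Nat.card G - Nat.card {g : G // orderOf g < B} := by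
    have h := Fintype.card_subtype_compl (fun g : G => orderOf g < B)
    simp only [Nat.card_eq_fintype_card]
    rw [← h]
    exact Fintype.card_congr (Equiv.subtypeEquivRight (by simp [not_lt]))
  have hsle : Nat.card {g : G // orderOf g < B} ≤ Nat.card G :=
    le_trans (Nat.le_mul_of_pos_left _ hp.pos) hcard
  have hNpos : 0 < Nat.card G := Nat.card_pos
  rw [hcompl, Nat.cast_sub hsle]
  have hppos : (0:ℝ) < p := by exact_mod_cast hp.pos
  have hNpos' : (0:ℝ) < Nat.card G := by exact_mod_cast hNpos
  rw [le_div_iff₀ hNpos']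
  have hcard' : (p:ℝ) * Nat.card {g : G // orderOf g < B} ≤ Nat.card G := by exact_mod_cast hcard
  have h1p : 1 / (p:ℝ) * Nat.card G ≥ Nat.card {g : G // orderOf g < B} := by
    rw [ge_iff_le, div_mul_eq_mul_div, le_div_iff₀ hppos]
    linarith
  nlinarith
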